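/- Let b ∈ ℂ with b ≠ 0. For b1, b2 ∈ ℂ let A2_{b1,b2} denote the ℂ-vector space with basis {L, W, x} equipped with the operations extending W(1,b) by x∘L = x, L∘x = b1·W + (1/2)x, x∘W = 0, W∘x = 0, x∘x = b2·W, [x,L] = −b·b1·W + (b/2)x, [x,W] = 0. Then: (i) A2_{b1,b2} is a Gel'fand-Dorfman bialgebra containing W(1,b) as a subalgebra; (ii) A2_{b1,b2} is equivalent to A2_{b1',b2'} if and only if there exist c2 ∈ ℂ and β ∈ ℂ* with b1 = β·b1' − c2/2 and b2 = β²·b2'; (iii) consequently, every A2_{b1,b2} is equivalent to A2_{0,0} or to A2_{0,1}, and A2_{0,0} is not equivalent to A2_{0,1}. -/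

import Mathlib

namespace GDExt

def IsNovikov {M : Type*} [AddCommGroup M] (mul : M → M → M) : Prop :=
  (∀ a b c, mul (mul a b) c - mul a (mul b c) = mul (mul b a) c - mul b (mul a c)) ∧
  ∀ a b c, mul (mul a b) c = mul (mul a c) b

def IsLieBracket {M : Type*} [AddCommGroup M] (br : M → M → M) : Prop :=
  (∀ a, br a a = 0) ∧ ∀ a b c, br a (br b c) = br (br a b) c + br b (br a c)

def IsGD {M : Type*} [AddCommGroup M] (mul br : M → M → M) : Prop :=
  IsNovikov mul ∧ IsLieBracket br ∧
  ∀ a b c, br a (mul b c) - br c (mul b a) + mul (br b a) c - mul (br b c) a - mul b (br a c) = 0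

variable {K : Type*} [Field K]
variable {A V : Type*} [AddCommGroup A] [Module K A] [AddCommGroup V] [Module K V]

/-- First component bilinear product of the unified product `A ♮ V`. -/
def uniMul (circ : A →ₗ[K] A →ₗ[K] A) (lA rA : A →ₗ[K] Module.End K V)
    (lV rV : V →ₗ[K] Module.End K A) (f : V →ₗ[K] V →ₗ[K] A)
    (st : V →ₗ[K] V →ₗ[K] V) : A × V → A × V → A × V :=
  fun p q =>
    (circ p.1 q.1 + lV p.2 q.1 + rV q.2 p.1 + f p.2 q.2,
     st p.2 q.2 + lA p.1 q.2 + rA q.1 p.2)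

/-- Bracket of the unified product `A ♮ V`. -/
def uniBr (brk : A →ₗ[K] A →ₗ[K] A) (tl : V →ₗ[K] A →ₗ[K] V) (tr : V →ₗ[K] A →ₗ[K] A)
    (hm : V →ₗ[K] V →ₗ[K] A) (vbr : V →ₗ[K] V →ₗ[K] V) : A × V → A × V → A × V :=
  fun p q =>
    (brk p.1 q.1 + tr p.2 q.1 - tr q.2 p.1 + hm p.2 q.2,
     vbr p.2 q.2 + tl p.2 q.1 - tl q.2 p.1)

end GDExt

namespace GDExt

/-- Equivalence of GD bialgebra structures on `ℂL ⊕ ℂW ⊕ ℂx` (coordinates `0 ↦ L`,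
`1 ↦ W`, `2 ↦ x`): a GD bialgebra isomorphism restricting to the identity on
`ℂL ⊕ ℂW`. -/
def GDequiv3 (m br m' br' : (Fin 3 → ℂ) → (Fin 3 → ℂ) → (Fin 3 → ℂ)) : Prop :=
  ∃ φ : (Fin 3 → ℂ) ≃ₗ[ℂ] (Fin 3 → ℂ),
    (∀ u v, φ (m u v) = m' (φ u) (φ v)) ∧
    (∀ u v, φ (br u v) = br' (φ u) (φ v)) ∧
    (∀ u : Fin 3 → ℂ, u 2 = 0 → φ u = u)

end GDExt

namespace GDExt

/-- The Novikov product of `A2_{b1,b2}` in the basis `L = e0, W = e1, x = e2`. -/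
noncomputable def A2mul (b1 b2 : ℂ) : (Fin 3 → ℂ) → (Fin 3 → ℂ) → (Fin 3 → ℂ) :=
  fun u v =>
    ![u 0 * v 0,
      b1 * (u 0 * v 2) + u 1 * v 0 + b2 * (u 2 * v 2),
      (1 / 2) * (u 0 * v 2) + u 2 * v 0]

/-- The Lie bracket of `A2_{b1,b2}` (for the parameter `b` of `W(1,b)`). -/
noncomputable def A2br (b b1 b2 : ℂ) : (Fin 3 → ℂ) → (Fin 3 → ℂ) → (Fin 3 → ℂ) :=
  fun u v =>
    ![0,
      -b * (u 0 * v 1 - u 1 * v 0) - b * b1 * (u 2 * v 0 - u 0 * v 2),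
      (b / 2) * (u 2 * v 0 - u 0 * v 2)]


/-- The equivalence `u ↦ (u 0, u 1 + c2·u 2, β·u 2)` fixing `ℂL ⊕ ℂW`. -/
noncomputable def phiEquiv (c2 β : ℂ) (hβ : β ≠ 0) : (Fin 3 → ℂ) ≃ₗ[ℂ] (Fin 3 → ℂ) where
  toFun u := ![u 0, u 1 + c2 * u 2, β * u 2]
  invFun u := ![u 0, u 1 - (c2 / β) * u 2, u 2 / β]
  map_add' u v := by funext i; fin_cases i <;> simp <;> ring
  map_smul' r u := by funext i; fin_cases i <;> simp <;> ring
  left_inv u := by funext i; fin_cases i <;> simp <;> field_simp <;> first | rfl | ring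
  right_inv u := by funext i; fin_cases i <;> simp <;> field_simp <;> first | rfl | ring

lemma equiv_backward (b b1 b2 b1' b2' c2 β : ℂ) (hβ : β ≠ 0)
    (h1 : b1 = β * b1' - c2 / 2) (h2 : b2 = β ^ 2 * b2') :
    GDequiv3 (A2mul b1 b2) (A2br b b1 b2) (A2mul b1' b2') (A2br b b1' b2') := by
  refine ⟨phiEquiv c2 β hβ, ?_, ?_, ?_⟩
  · intro u v; funext i; fin_cases i <;>
      simp [phiEquiv, A2mul, h1, h2] <;> ring
  · intro u v; funext i; fin_cases i <;>
      simp [phiEquiv, A2br, h1, h2] <;> ring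
  · intro u hu; funext i; fin_cases i <;> simp [phiEquiv, hu]

lemma equiv_forward (b b1 b2 b1' b2' : ℂ)
    (h : GDequiv3 (A2mul b1 b2) (A2br b b1 b2) (A2mul b1' b2') (A2br b b1' b2')) :
    ∃ c2 β : ℂ, β ≠ 0 ∧ b1 = β * b1' - c2 / 2 ∧ b2 = β ^ 2 * b2' := by
  obtain ⟨φ, hm, hbr, hfix⟩ := h
  set w : Fin 3 → ℂ := φ ![0,0,1] with hw
  have hβ : w 2 ≠ 0 := by
    intro h0
    have hfw : φ w = w := hfix w h0
    have heq : (![0,0,1] : Fin 3 → ℂ) = w := φ.injective (by rw [hfw, ← hw])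
    have := congrFun heq 2
    simp [h0] at this
  have he0 : φ ![1,0,0] = ![1,0,0] := hfix _ (by simp)
  have e1 := hm ![1,0,0] ![0,0,1]
  have hd : A2mul b1 b2 ![1,0,0] ![0,0,1] = ![0,b1,0] + (1/2 : ℂ) • ![0,0,1] := by
    funext i; fin_cases i <;> simp [A2mul] <;> ring
  rw [hd, map_add, map_smul, hfix ![0,b1,0] (by simp), he0, ← hw] at e1
  have h0 := congrFun e1 0
  have h1 := congrFun e1 1
  simp [A2mul] at h0 h1
  have hw0 : w 0 = 0 := by linear_combination -2 * h0
  have e2 := hm ![0,0,1] ![0,0,1]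
  have hd2 : A2mul b1 b2 ![0,0,1] ![0,0,1] = ![0,b2,0] := by
    funext i; fin_cases i <;> simp [A2mul]
  rw [hd2, hfix ![0,b2,0] (by simp), ← hw] at e2
  have h2 := congrFun e2 1
  simp [A2mul] at h2
  exact ⟨w 1, w 2, hβ, by linear_combination h1,
    by linear_combination h2 + (b1' * w 2 + w 1) * hw0⟩

/-- Case A2. -/
theorem caseA2 (b : ℂ) (hb : b ≠ 0) :
    (∀ b1 b2 : ℂ, IsGD (A2mul b1 b2) (A2br b b1 b2) ∧
      ∀ u v : Fin 3 → ℂ, u 2 = 0 → v 2 = 0 →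
        A2mul b1 b2 u v = ![u 0 * v 0, u 1 * v 0, 0] ∧
        A2br b b1 b2 u v = ![0, -b * (u 0 * v 1 - u 1 * v 0), 0]) ∧
    (∀ b1 b2 b1' b2' : ℂ,
      GDequiv3 (A2mul b1 b2) (A2br b b1 b2) (A2mul b1' b2') (A2br b b1' b2') ↔
        ∃ c2 β : ℂ, β ≠ 0 ∧ b1 = β * b1' - c2 / 2 ∧ b2 = β ^ 2 * b2') ∧
    (∀ b1 b2 : ℂ,
      GDequiv3 (A2mul b1 b2) (A2br b b1 b2) (A2mul 0 0) (A2br b 0 0) ∨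
      GDequiv3 (A2mul b1 b2) (A2br b b1 b2) (A2mul 0 1) (A2br b 0 1)) ∧
    ¬ GDequiv3 (A2mul 0 0) (A2br b 0 0) (A2mul 0 1) (A2br b 0 1) := by
  refine ⟨?_, ?_, ?_, ?_⟩
  · intro b1 b2
    refine ⟨⟨⟨?_, ?_⟩, ⟨?_, ?_⟩, ?_⟩, ?_⟩
    · intro a c d; funext i; fin_cases i <;> simp [A2mul] <;> ring
    · intro a c d; funext i; fin_cases i <;> simp [A2mul] <;> ring
    · intro a; funext i; fin_cases i
      · simp [A2br]
      · simp [A2br]; ring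
      · simp [A2br]; right; ring
    · intro a c d; funext i; fin_cases i <;> simp [A2br] <;> ring
    · intro a c d; funext i; fin_cases i <;> simp [A2br, A2mul] <;> ring
    · intro u v hu hv
      constructor <;> (funext i; fin_cases i <;> simp [A2mul, A2br, hu, hv] <;> ring)
  · intro b1 b2 b1' b2'
    constructor
    · exact equiv_forward b b1 b2 b1' b2'
    · rintro ⟨c2, β, hβ, h1, h2⟩
      exact equiv_backward b b1 b2 b1' b2' c2 β hβ h1 h2
  · intro b1 b2
    by_cases hb2 : b2 = 0
    · exact Or.inl (equiv_backward b b1 b2 0 0 (-2 * b1) 1 one_ne_zero (by ring)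
        (by rw [hb2]; ring))
    · obtain ⟨β, hβ2⟩ := IsAlgClosed.exists_pow_nat_eq b2 (n := 2) (by norm_num)
      have hβ : β ≠ 0 := by
        intro h0; rw [h0] at hβ2; simp at hβ2; exact hb2 hβ2.symm
      exact Or.inr (equiv_backward b b1 b2 0 1 (-2 * b1) β hβ (by ring)
        (by rw [← hβ2]; ring))
  · intro h
    obtain ⟨c2, β, hβ, h1, h2⟩ := equiv_forward b 0 0 0 1 h
    apply hβ
    have : β ^ 2 = 0 := by linear_combination -h2
    exact pow_eq_zero_iff (n := 2) (by norm_num) |>.mp this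


end GDExt
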